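/- Let k be an algebraically closed field of characteristic 2 and let f, g, u be polynomials in k[X₁,…,Xₙ] such that: (a) for every exponent vector m : Fin n →₀ ℕ with all components even, the coefficient of X^m in f equals the coefficient of X^m in u²; and (b) for each variable Xᵢ, the degree of g in Xᵢ equals the degree of u in Xᵢ. Then there exists a polynomial h ∈ k[X₁,…,Xₙ], with degree in each variable at most the degree of u in that variable, such that f + h² + g·h has zero square part: for every exponent vector m with all components even, the coefficient of X^m in f + h² + g·h is zero. -/

import Mathlib

open MvPolynomial

namespace SqPartAux

variable {k : Type*} [Field k] {τ : Type*}

/-- weight of an exponent vector -/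
def wt (m : τ →₀ ℕ) : ℕ := m.sum fun _ e => e

lemma wt_add (a b : τ →₀ ℕ) : wt (a + b) = wt a + wt b :=
  Finsupp.sum_add_index' (fun _ => rfl) (fun _ _ _ => rfl)

lemma wt_two_smul (a : τ →₀ ℕ) : wt (2 • a) = 2 * wt a := by
  rw [two_smul, wt_add, two_mul]

lemma wt_single (j : τ) (e : ℕ) : wt (Finsupp.single j e) = e :=
  Finsupp.sum_single_index rfl

lemma two_smul_inj {a b : τ →₀ ℕ} (h : (2:ℕ) • a = 2 • b) : a = b := by
  ext i
  have := congrArg (fun f => f i) h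
  simp only [Finsupp.smul_apply, smul_eq_mul] at this
  omega

lemma apply_le_wt (m : τ →₀ ℕ) (j : τ) : m j ≤ wt m := by
  by_cases h : m j = 0
  · simp [h]
  · exact Finset.single_le_sum (f := fun i => m i) (fun _ _ => Nat.zero_le _)
      (Finsupp.mem_support_iff.mpr h)

/-- `p` has a unique monomial of maximal weight, namely `m`, with coefficient 1. -/
def Lead (p : MvPolynomial τ k) (m : τ →₀ ℕ) : Prop :=
  coeff m p = 1 ∧ ∀ m₀ ∈ p.support, m₀ = m ∨ wt m₀ < wt m

lemma Lead.one : Lead (1 : MvPolynomial τ k) 0 := by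
  classical
  constructor
  · simp [coeff_one]
  · intro m₀ hm₀
    rw [mem_support_iff, coeff_one] at hm₀
    left
    by_contra h
    rw [if_neg (fun hh => h hh.symm)] at hm₀
    exact hm₀ rfl

lemma Lead.mul {p q : MvPolynomial τ k} {m m' : τ →₀ ℕ}
    (hp : Lead p m) (hq : Lead q m') : Lead (p * q) (m + m') := by
  classical
  have hmm : (m, m') ∈ Finset.HasAntidiagonal.antidiagonal (m + m') :=
    (Finset.HasAntidiagonal.mem_antidiagonal (n := m + m') (a := (m, m'))).mpr rfl
  constructor
  · rw [coeff_mul, Finset.sum_eq_single_of_mem (m, m') hmm]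
    · rw [hp.1, hq.1, one_mul]
    · rintro ⟨u, v⟩ huv hne
      rw [Finset.HasAntidiagonal.mem_antidiagonal] at huv
      dsimp only at huv hne
      by_contra h0
      dsimp only at h0
      have hu : u ∈ p.support := by
        rw [mem_support_iff]; intro h; exact h0 (by simp [h])
      have hv : v ∈ q.support := by
        rw [mem_support_iff]; intro h; exact h0 (by simp [h])
      have hwt := congrArg wt huv
      rw [wt_add, wt_add] at hwt
      rcases hp.2 u hu with rfl | hu'
      · have hveq : v = m' := by exact add_left_cancel huv
        exact hne (by rw [hveq])
      · have hv' : wt v ≤ wt m' := by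
          rcases hq.2 v hv with heq | h
          · exact le_of_eq (congrArg wt heq)
          · exact h.le
        omega
  · intro m₀ hm₀
    have hmem := support_mul p q hm₀
    rw [Finset.mem_add] at hmem
    obtain ⟨u, hu, v, hv, rfl⟩ := hmem
    rcases hp.2 u hu with rfl | hu' <;> rcases hq.2 v hv with rfl | hv'
    · exact Or.inl rfl
    · right; rw [wt_add, wt_add]; omega
    · right; rw [wt_add, wt_add]; omega
    · right; rw [wt_add, wt_add]; omega

lemma Lead.pow {p : MvPolynomial τ k} {m : τ →₀ ℕ} (hp : Lead p m) (e : ℕ) :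
    Lead (p ^ e) (e • m) := by
  induction e with
  | zero => simpa using Lead.one
  | succ e ih =>
      rw [pow_succ, succ_nsmul]
      exact ih.mul hp

lemma lead_y {ℓ : MvPolynomial τ k} (hl : ℓ.totalDegree ≤ 1) (j : τ) :
    Lead (X j ^ 2 + ℓ) (Finsupp.single j 2) := by
  classical
  have hX : (X j ^ 2 : MvPolynomial τ k) = monomial (Finsupp.single j 2) 1 :=
    X_pow_eq_monomial
  have hcl : coeff (Finsupp.single j 2) ℓ = 0 := by
    by_contra h
    have h1 := le_totalDegree (p := ℓ) (mem_support_iff.mpr h)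
    have h2 : ((Finsupp.single j 2).sum fun _ e => e) = 2 := wt_single j 2
    omega
  constructor
  · rw [coeff_add, hcl, add_zero, hX, coeff_monomial, if_pos rfl]
  · intro m₀ hm₀
    rcases Finset.mem_union.mp (support_add hm₀) with h | h
    · left
      rw [hX] at h
      have := support_monomial (a := (1:k)) (s := Finsupp.single j 2) ▸ h
      simpa using this
    · right
      have h1 := le_totalDegree (p := ℓ) h
      rw [wt_single]
      have h2 : wt m₀ ≤ 1 := le_trans h1 hl
      omega

lemma lead_prod (y : τ → MvPolynomial τ k) (hy : ∀ j, Lead (y j) (Finsupp.single j 2))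
    (d : τ →₀ ℕ) : Lead (d.prod fun j e => y j ^ e) ((2:ℕ) • d) := by
  induction d using Finsupp.induction with
  | zero => simpa using Lead.one
  | single_add j e f hjf he ih =>
      rw [Finsupp.prod_add_index' (fun i => pow_zero (y i)) (fun i e1 e2 => pow_add (y i) e1 e2)]
      have hsingle : ((Finsupp.single j e).prod fun i e' => y i ^ e') = y j ^ e :=
        Finsupp.prod_single_index (pow_zero (y j))
      rw [hsingle]
      have h2 : (2:ℕ) • (Finsupp.single j e + f) = e • Finsupp.single j 2 + 2 • f := by
        rw [smul_add]
        congr 1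
        rw [Finsupp.smul_single, Finsupp.smul_single, smul_eq_mul, smul_eq_mul, mul_comm]
      rw [h2]
      exact ((hy j).pow e).mul ih

lemma aeval_inj (y : τ → MvPolynomial τ k) (hy : ∀ j, Lead (y j) (Finsupp.single j 2)) :
    Function.Injective (aeval y : MvPolynomial τ k →ₐ[k] MvPolynomial τ k) := by
  classical
  rw [injective_iff_map_eq_zero]
  intro Q hQ0
  by_contra hQ
  obtain ⟨a, hamem, haD⟩ :=
    Finset.exists_mem_eq_sup Q.support (support_nonempty.mpr hQ) (fun s => s.sum fun _ e => e)
  have key : coeff ((2:ℕ) • a) (aeval y Q) = coeff a Q := by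
    rw [aeval_def, eval₂_eq, coeff_sum]
    have hC : ∀ e : k, (algebraMap k (MvPolynomial τ k)) e = C e := fun _ => rfl
    rw [Finset.sum_eq_single a]
    · rw [hC, coeff_C_mul]
      have h1 : (∏ i ∈ a.support, y i ^ a i) = a.prod fun j e => y j ^ e := rfl
      rw [h1, (lead_prod y hy a).1, mul_one]
    · intro d hd hda
      rw [hC, coeff_C_mul]
      have h1 : (∏ i ∈ d.support, y i ^ d i) = d.prod fun j e => y j ^ e := rfl
      rw [h1]
      rcases eq_or_ne (coeff ((2:ℕ) • a) (d.prod fun j e => y j ^ e)) 0 with h | h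
      · rw [h, mul_zero]
      · exfalso
        rcases (lead_prod y hy d).2 _ (mem_support_iff.mpr h) with heq | hlt
        · exact hda (two_smul_inj heq).symm
        · have h2 : wt d ≤ wt a := by
            have h3 := le_totalDegree (p := Q) hd
            rw [totalDegree, haD] at h3
            exact h3
          rw [wt_two_smul, wt_two_smul] at hlt
          omega
    · intro hna; exact absurd hamem hna
  rw [hQ0, coeff_zero] at key
  exact (mem_support_iff.mp hamem) key.symm

lemma exists_point {k : Type*} [Field k] [IsAlgClosed k] {τ : Type*} [Finite τ]
    (ℓ : τ → MvPolynomial τ k) (hl : ∀ j, (ℓ j).totalDegree ≤ 1) (t : τ → k) :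
    ∃ a : τ → k, ∀ j, eval a (X j ^ 2 + ℓ j) = t j := by
  classical
  letI := Fintype.ofFinite τ
  set y : τ → MvPolynomial τ k := fun j => X j ^ 2 + ℓ j with hy_def
  have hy : ∀ j, Lead (y j) (Finsupp.single j 2) := fun j => lead_y (hl j) j
  set F : MvPolynomial (PLift τ) k →ₐ[k] MvPolynomial τ k :=
    (aeval y).comp (rename PLift.down) with hF_def
  have hFX : ∀ j : τ, F (X (PLift.up j)) = y j := by
    intro j
    rw [hF_def, AlgHom.comp_apply, rename_X, aeval_X]
  have hFC : ∀ c : k, F (C c) = C c := by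
    intro j
    rw [hF_def, AlgHom.comp_apply, rename_C, aeval_C]
    rfl
  have Finj : Function.Injective ⇑F.toRingHom := by
    show Function.Injective ⇑F
    rw [hF_def, AlgHom.coe_comp]
    exact (aeval_inj y hy).comp (rename_injective _ PLift.down_injective)
  letI alg : Algebra (MvPolynomial (PLift τ) k) (MvPolynomial τ k) := F.toRingHom.toAlgebra
  have halgmap : algebraMap (MvPolynomial (PLift τ) k) (MvPolynomial τ k) = F.toRingHom := rfl
  -- the generators: squarefree monomials
  set G : Set (MvPolynomial τ k) :=
    Set.range fun s : Finset τ => ∏ j ∈ s, (X j : MvPolynomial τ k) with hG_def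
  have base : ∀ (m : τ →₀ ℕ), (∀ j, m j ≤ 1) → ∀ c : k,
      monomial m c ∈ Submodule.span (MvPolynomial (PLift τ) k) G := by
    intro m hm c
    have hmono : (monomial m c : MvPolynomial τ k)
        = (C c : MvPolynomial (PLift τ) k) • ∏ j ∈ m.support, (X j : MvPolynomial τ k) := by
      rw [Algebra.smul_def, halgmap]
      show monomial m c = F (C c) * _
      rw [hFC, monomial_eq]
      congr 1
      rw [Finsupp.prod]
      refine Finset.prod_congr rfl fun j hj => ?_
      have h1 : m j = 1 :=
        le_antisymm (hm j) (Nat.one_le_iff_ne_zero.mpr (Finsupp.mem_support_iff.mp hj))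
      rw [h1, pow_one]
    rw [hmono]
    exact Submodule.smul_mem _ _ (Submodule.subset_span ⟨m.support, rfl⟩)
  have claim : ∀ (N : ℕ) (m : τ →₀ ℕ), wt m ≤ N → ∀ c : k,
      monomial m c ∈ Submodule.span (MvPolynomial (PLift τ) k) G := by
    intro N
    induction N with
    | zero =>
        intro m hm c
        refine base m (fun j => ?_) c
        have := apply_le_wt m j
        omega
    | succ N ih =>
        intro m hm c
        by_cases hsq : ∀ j, m j ≤ 1
        · exact base m hsq c
        · push_neg at hsq
          obtain ⟨j, hj⟩ := hsq
          have hle : Finsupp.single j 2 ≤ m := by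
            rw [Finsupp.single_le_iff]
            omega
          set m' := m - Finsupp.single j 2 with hm'_def
          have hmm : m' + Finsupp.single j 2 = m := tsub_add_cancel_of_le hle
          have hwt : wt m' + 2 = wt m := by
            have h1 := wt_add m' (Finsupp.single j 2)
            rw [hmm, wt_single] at h1
            omega
          have hXm : (X j ^ 2 : MvPolynomial τ k) * monomial m' c = monomial m c := by
            rw [X_pow_eq_monomial, monomial_mul, one_mul, add_comm, hmm]
          have key : (monomial m c : MvPolynomial τ k)
              = (X (PLift.up j) : MvPolynomial (PLift τ) k) • monomial m' c
                - ℓ j * monomial m' c := by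
            rw [Algebra.smul_def, halgmap]
            show _ = F (X (PLift.up j)) * _ - _
            rw [hFX]
            show (monomial m c : MvPolynomial τ k) = (X j ^ 2 + ℓ j) * monomial m' c - _
            rw [add_mul, add_sub_cancel_right, hXm]
          rw [key]
          refine Submodule.sub_mem _ ?_ ?_
          · exact Submodule.smul_mem _ _ (ih m' (by omega) c)
          · have hexp : ℓ j * monomial m' c
                = ∑ e ∈ (ℓ j).support, monomial (e + m') (coeff e (ℓ j) * c) := by
              conv_lhs => rw [(ℓ j).as_sum]
              rw [Finset.sum_mul]
              exact Finset.sum_congr rfl fun e he => by rw [monomial_mul]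
            rw [hexp]
            refine Submodule.sum_mem _ fun e he => ?_
            refine ih _ ?_ _
            have h1 : wt e ≤ 1 := le_trans (le_totalDegree he) (hl j)
            rw [wt_add]
            omega
  have hspan : Submodule.span (MvPolynomial (PLift τ) k) G = ⊤ := by
    rw [eq_top_iff]
    rintro p -
    rw [p.as_sum]
    exact Submodule.sum_mem _ fun m hm => claim (wt m) m le_rfl _
  haveI : Module.Finite (MvPolynomial (PLift τ) k) (MvPolynomial τ k) :=
    ⟨Submodule.fg_def.mpr ⟨G, Set.finite_range _, hspan⟩⟩
  haveI hint : Algebra.IsIntegral (MvPolynomial (PLift τ) k) (MvPolynomial τ k) :=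
    Algebra.IsIntegral.of_finite _ _
  set ev : MvPolynomial (PLift τ) k →+* k := (eval fun j : PLift τ => t j.down : _ →+* k) with hev_def
  set nn : Ideal (MvPolynomial (PLift τ) k) := RingHom.ker ev with hnn_def
  haveI : nn.IsMaximal := RingHom.ker_isMaximal_of_surjective ev (fun c => ⟨C c, by simp [hev_def]⟩)
  obtain ⟨Q, hQmax, hQcomap⟩ := Ideal.exists_ideal_over_maximal_of_isIntegral nn
    (by
      rw [halgmap]
      rw [(RingHom.injective_iff_ker_eq_bot _).mp Finj]
      exact bot_le)
  obtain ⟨a, haQ⟩ := (isMaximal_iff_eq_vanishingIdeal_singleton (I := Q)).mp hQmax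
  refine ⟨a, fun j => ?_⟩
  have h1 : X (PLift.up j) - C (t j) ∈ nn := by
    rw [hnn_def, RingHom.mem_ker, map_sub, hev_def]
    simp
  rw [← hQcomap] at h1
  have h2 := Ideal.mem_comap.mp h1
  rw [halgmap] at h2
  have h3 : F (X (PLift.up j) - C (t j)) ∈ Q := h2
  rw [map_sub, hFX, hFC] at h3
  rw [haQ, mem_vanishingIdeal_singleton_iff, map_sub, aeval_C, sub_eq_zero] at h3
  exact h3

end SqPartAux

/-- Over an algebraically closed field of characteristic 2: if the square part of `f` is `u²`
and `degᵢ g = degᵢ u` for every variable, then there is `h` with `degᵢ h ≤ degᵢ u` such that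
`f + h² + g·h` has zero square part. -/
theorem square_part_removable
    (k : Type*) [Field k] [IsAlgClosed k] [CharP k 2]
    (n : ℕ) (f g u : MvPolynomial (Fin n) k)
    (hf : ∀ m : Fin n →₀ ℕ, (∀ i : Fin n, Even (m i)) → coeff m f = coeff m (u ^ 2))
    (hg : ∀ i : Fin n, degreeOf i g = degreeOf i u) :
    ∃ h : MvPolynomial (Fin n) k,
      (∀ i : Fin n, degreeOf i h ≤ degreeOf i u) ∧
      ∀ m : Fin n →₀ ℕ, (∀ i : Fin n, Even (m i)) →
        coeff m (f + h ^ 2 + g * h) = 0 := by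
  classical
  haveI : Fact (Nat.Prime 2) := ⟨Nat.prime_two⟩
  haveI hfin : Finite {m : Fin n →₀ ℕ // ∀ i, m i ≤ degreeOf i u} := by
    apply Finite.of_injective
      (fun m : {m : Fin n →₀ ℕ // ∀ i, m i ≤ degreeOf i u} =>
        (fun i => (⟨m.1 i, Nat.lt_succ_of_le (m.2 i)⟩ : Fin (degreeOf i u + 1))))
    intro x y hxy
    apply Subtype.ext
    ext i
    exact congrArg Fin.val (congrFun hxy i)
  letI := Fintype.ofFinite {m : Fin n →₀ ℕ // ∀ i, m i ≤ degreeOf i u}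
  set lc : {m : Fin n →₀ ℕ // ∀ i, m i ≤ degreeOf i u} →
      {m : Fin n →₀ ℕ // ∀ i, m i ≤ degreeOf i u} → k :=
    fun j b => if b.1 ≤ 2 • j.1 then coeff (2 • j.1 - b.1) g else 0 with hlc_def
  set ℓ : {m : Fin n →₀ ℕ // ∀ i, m i ≤ degreeOf i u} →
      MvPolynomial {m : Fin n →₀ ℕ // ∀ i, m i ≤ degreeOf i u} k :=
    fun j => ∑ b, C (lc j b) * X b with hℓ_def
  have hℓdeg : ∀ j, (ℓ j).totalDegree ≤ 1 := by
    intro j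
    rw [hℓ_def]
    refine le_trans (totalDegree_finset_sum _ _) ?_
    refine Finset.sup_le fun b _ => ?_
    refine le_trans (totalDegree_mul _ _) ?_
    rw [totalDegree_C, totalDegree_X]
  obtain ⟨a, ha⟩ := SqPartAux.exists_point ℓ hℓdeg (fun j => coeff (2 • j.1) f)
  set h : MvPolynomial (Fin n) k := ∑ b, monomial b.1 (a b) with hh_def
  have coeff_h : ∀ e : Fin n →₀ ℕ,
      coeff e h = if he : ∀ i, e i ≤ degreeOf i u then a ⟨e, he⟩ else 0 := by
    intro e
    rw [hh_def, coeff_sum]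
    split_ifs with he
    · rw [Finset.sum_eq_single (⟨e, he⟩ : {m : Fin n →₀ ℕ // ∀ i, m i ≤ degreeOf i u})]
      · rw [coeff_monomial, if_pos rfl]
      · intro b _ hb
        rw [coeff_monomial, if_neg]
        exact fun hbe => hb (Subtype.ext hbe)
      · intro hmem; exact absurd (Finset.mem_univ _) hmem
    · refine Finset.sum_eq_zero fun b _ => ?_
      rw [coeff_monomial, if_neg]
      exact fun hbe => he (hbe ▸ b.2)
  have hdeg : ∀ i, degreeOf i h ≤ degreeOf i u := by
    intro i
    rw [degreeOf_eq_sup]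
    refine Finset.sup_le fun e hee => ?_
    have hne := mem_support_iff.mp hee
    rw [coeff_h] at hne
    by_cases he : ∀ i, e i ≤ degreeOf i u
    · exact he i
    · rw [dif_neg he] at hne; exact absurd rfl hne
  have coeff_sq : ∀ (v : MvPolynomial (Fin n) k) (m₂ : Fin n →₀ ℕ),
      coeff (2 • m₂) (v ^ 2) = coeff m₂ v ^ 2 := by
    intro v m₂
    conv_lhs => rw [v.as_sum]
    rw [sum_pow_char, coeff_sum]
    have hterm : ∀ m ∈ v.support,
        coeff ((2:ℕ) • m₂) (monomial m (coeff m v) ^ 2) = if m = m₂ then coeff m v ^ 2 else 0 := by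
      intro m _
      rw [monomial_pow, coeff_monomial]
      by_cases hm : m = m₂
      · rw [if_pos hm, if_pos (by rw [hm])]
      · rw [if_neg hm, if_neg (fun hc => hm (SqPartAux.two_smul_inj hc))]
    rw [Finset.sum_congr rfl hterm, Finset.sum_ite_eq' v.support m₂ (fun m => coeff m v ^ 2)]
    by_cases hm : m₂ ∈ v.support
    · rw [if_pos hm]
    · rw [if_neg hm, notMem_support_iff.mp hm, zero_pow two_ne_zero]
  have coeff_gh : ∀ m : Fin n →₀ ℕ, coeff m (g * h)
      = ∑ b, (if b.1 ≤ m then coeff (m - b.1) g * a b else 0) := by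
    intro m
    rw [hh_def, Finset.mul_sum, coeff_sum]
    exact Finset.sum_congr rfl fun b _ => coeff_mul_monomial' m b.1 (a b) g
  have heval : ∀ j : {m : Fin n →₀ ℕ // ∀ i, m i ≤ degreeOf i u},
      a j ^ 2 + ∑ b, lc j b * a b = coeff (2 • j.1) f := by
    intro j
    have h0 := ha j
    have h2 : eval a (ℓ j) = ∑ b, lc j b * a b := by
      rw [hℓ_def]
      show eval a (∑ b, C (lc j b) * X b) = _
      rw [map_sum]
      exact Finset.sum_congr rfl fun b _ => by rw [map_mul, eval_C, eval_X]
    rw [map_add, map_pow, eval_X, h2] at h0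
    exact h0
  refine ⟨h, hdeg, fun m hmeven => ?_⟩
  set m₂ : Fin n →₀ ℕ := m.mapRange (· / 2) (by norm_num) with hm₂_def
  have hm2 : m = 2 • m₂ := by
    ext i
    rw [Finsupp.smul_apply, smul_eq_mul, hm₂_def, Finsupp.mapRange_apply]
    exact (Nat.mul_div_cancel' ((hmeven i).two_dvd)).symm
  rw [coeff_add, coeff_add]
  by_cases he : ∀ i, m₂ i ≤ degreeOf i u
  · set j : {m : Fin n →₀ ℕ // ∀ i, m i ≤ degreeOf i u} := ⟨m₂, he⟩ with hj_def
    have e1 : coeff m (h ^ 2) = a j ^ 2 := by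
      rw [hm2, coeff_sq, coeff_h, dif_pos he]
    have e2 : coeff m (g * h) = ∑ b, lc j b * a b := by
      rw [coeff_gh]
      refine Finset.sum_congr rfl fun b _ => ?_
      rw [hlc_def]
      show _ = (if b.1 ≤ 2 • j.1 then coeff (2 • j.1 - b.1) g else 0) * a b
      have hj1 : j.1 = m₂ := rfl
      rw [hj1, ← hm2]
      split_ifs with hb
      · rfl
      · rw [zero_mul]
    have e3 : coeff (2 • j.1) f = coeff m f := by
      rw [hm2]
    rw [e1, e2]
    have h4 := heval j
    rw [e3] at h4
    calc coeff m f + a j ^ 2 + ∑ b, lc j b * a b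
        = coeff m f + (a j ^ 2 + ∑ b, lc j b * a b) := by ring
      _ = coeff m f + coeff m f := by rw [h4]
      _ = 0 := CharTwo.add_self_eq_zero _
  · push_neg at he
    obtain ⟨i, hi⟩ := he
    have e1 : coeff m f = 0 := by
      rw [hf m hmeven, hm2, coeff_sq]
      have hu0 : coeff m₂ u = 0 := by
        by_contra hc
        have hle := Finset.le_sup (f := fun m : Fin n →₀ ℕ => m i) (mem_support_iff.mpr hc)
        rw [← degreeOf_eq_sup] at hle
        have hle2 : m₂ i ≤ degreeOf i u := hle
        omega
      rw [hu0, zero_pow two_ne_zero]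
    have e2 : coeff m (h ^ 2) = 0 := by
      rw [hm2, coeff_sq, coeff_h, dif_neg, zero_pow two_ne_zero]
      push_neg
      exact ⟨i, hi⟩
    have e3 : coeff m (g * h) = 0 := by
      rw [coeff_gh]
      refine Finset.sum_eq_zero fun b _ => ?_
      split_ifs with hb
      · have hg0 : coeff (m - b.1) g = 0 := by
          by_contra hc
          have hle := Finset.le_sup (f := fun m : Fin n →₀ ℕ => m i) (mem_support_iff.mpr hc)
          rw [← degreeOf_eq_sup, hg i] at hle
          have hle2 : (m - b.1) i ≤ degreeOf i u := hle
          have hsub : (m - b.1) i = m i - b.1 i := Finsupp.tsub_apply m b.1 i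
          have hmi : m i = 2 * m₂ i := by rw [hm2]; rw [Finsupp.smul_apply, smul_eq_mul]
          have hbi : b.1 i ≤ degreeOf i u := b.2 i
          omega
        rw [hg0, zero_mul]
      · rfl
    rw [e1, e2, e3, add_zero, add_zero]
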